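/- Let λ : (0,1) → (0,∞) satisfy λ(x) = 1/(φ(x)²·∫ₓ¹ φ(s)^{−2} ds), where φ is a positive C¹ function on (0,1) extending continuously to [0,1] with φ(0) = 0, φ'(0) = 1 and φ(1) > 0. Then for any a ∈ (0,1), the limits lim_{t→0⁺} λ(t)·exp(−∫ₜᵃ λ(s) ds) and lim_{t→1⁻} λ(t)·exp(−∫ₐᵗ λ(s) ds) exist, are finite, and are strictly positive; consequently ∫₀ᵃ λ(s) ds = +∞ and ∫ₐ¹ λ(s) ds = +∞. -/

import Mathlib

open Set MeasureTheory intervalIntegral Filter Topology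

noncomputable def II (φ : ℝ → ℝ) (x : ℝ) : ℝ := ∫ s in x..1, ((φ s) ^ 2)⁻¹

lemma gcont {φ : ℝ → ℝ} (hφc : ContinuousOn φ (Icc 0 1))
    (hφpos : ∀ x ∈ Ioo (0:ℝ) 1, 0 < φ x) :
    ContinuousOn (fun s => ((φ s) ^ 2)⁻¹) (Ioo 0 1) := by
  apply ContinuousOn.inv₀
  · exact ((hφc.mono (Ioo_subset_Icc_self)).pow 2)
  · intro x hx
    exact pow_ne_zero 2 (hφpos x hx).ne'

lemma II_pos {φ : ℝ → ℝ} (hφpos : ∀ x ∈ Ioo (0:ℝ) 1, 0 < φ x)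
    (hint : ∀ x ∈ Ioo (0:ℝ) 1,
      IntervalIntegrable (fun s => ((φ s) ^ 2)⁻¹) volume x 1)
    {x : ℝ} (hx : x ∈ Ioo (0:ℝ) 1) : 0 < II φ x := by
  refine intervalIntegral_pos_of_pos_on (hint x hx) (fun s hs => ?_) hx.2
  exact inv_pos.mpr (pow_pos (hφpos s ⟨lt_trans hx.1 hs.1, hs.2⟩) 2)

lemma II_hasDerivAt {φ : ℝ → ℝ} (hφc : ContinuousOn φ (Icc 0 1))
    (hφpos : ∀ x ∈ Ioo (0:ℝ) 1, 0 < φ x)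
    (hint : ∀ x ∈ Ioo (0:ℝ) 1,
      IntervalIntegrable (fun s => ((φ s) ^ 2)⁻¹) volume x 1)
    {x : ℝ} (hx : x ∈ Ioo (0:ℝ) 1) :
    HasDerivAt (II φ) (-((φ x) ^ 2)⁻¹) x := by
  set g : ℝ → ℝ := fun s => ((φ s) ^ 2)⁻¹ with hg
  have hgc : ContinuousOn g (Ioo 0 1) := gcont hφc hφpos
  have hEq : (fun y => II φ x - ∫ s in x..y, g s) =ᶠ[𝓝 x] II φ := by
    filter_upwards [isOpen_Ioo.mem_nhds hx] with y hy
    have hm : min x y ∈ Ioo (0:ℝ) 1 := by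
      rcases min_cases x y with ⟨h, _⟩ | ⟨h, _⟩ <;> simp [h, hx, hy]
    have h1 : IntervalIntegrable g volume x y := by
      refine (hint _ hm).mono_set ?_
      rw [uIcc_of_le hm.2.le]
      exact Set.uIcc_subset_Icc ⟨min_le_left _ _, hx.2.le⟩ ⟨min_le_right _ _, hy.2.le⟩
    have h2 : IntervalIntegrable g volume y 1 := hint y hy
    have := intervalIntegral.integral_add_adjacent_intervals h1 h2
    simp only [II]
    linarith [this]
  have hD : HasDerivAt (fun y => II φ x - ∫ s in x..y, g s) (-(g x)) x := by
    have hder : HasDerivAt (fun u => ∫ s in x..u, g s) (g x) x := by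
      refine intervalIntegral.integral_hasDerivAt_right
        (by simp [intervalIntegrable_iff]) ?_ ?_
      · exact hgc.stronglyMeasurableAtFilter isOpen_Ioo x hx
      · exact hgc.continuousAt (isOpen_Ioo.mem_nhds hx)
    simpa using hder.const_sub (II φ x)
  exact hD.congr_of_eventuallyEq hEq.symm

lemma II_contOn {φ : ℝ → ℝ} (hφc : ContinuousOn φ (Icc 0 1))
    (hφpos : ∀ x ∈ Ioo (0:ℝ) 1, 0 < φ x)
    (hint : ∀ x ∈ Ioo (0:ℝ) 1,
      IntervalIntegrable (fun s => ((φ s) ^ 2)⁻¹) volume x 1) :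
    ContinuousOn (II φ) (Ioo 0 1) := fun x hx =>
  (II_hasDerivAt hφc hφpos hint hx).continuousAt.continuousWithinAt

lemma lam_eventually {φ lam : ℝ → ℝ}
    (hlam : ∀ x ∈ Ioo (0:ℝ) 1, lam x = ((φ x) ^ 2 * ∫ s in x..1, ((φ s) ^ 2)⁻¹)⁻¹)
    {x : ℝ} (hx : x ∈ Ioo (0:ℝ) 1) : lam x = ((φ x) ^ 2 * II φ x)⁻¹ := hlam x hx

lemma negLogII_hasDerivAt {φ lam : ℝ → ℝ} (hφc : ContinuousOn φ (Icc 0 1))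
    (hφpos : ∀ x ∈ Ioo (0:ℝ) 1, 0 < φ x)
    (hint : ∀ x ∈ Ioo (0:ℝ) 1,
      IntervalIntegrable (fun s => ((φ s) ^ 2)⁻¹) volume x 1)
    (hlam : ∀ x ∈ Ioo (0:ℝ) 1, lam x = ((φ x) ^ 2 * ∫ s in x..1, ((φ s) ^ 2)⁻¹)⁻¹)
    {x : ℝ} (hx : x ∈ Ioo (0:ℝ) 1) :
    HasDerivAt (fun y => -Real.log (II φ y)) (lam x) x := by
  have h1 := (II_hasDerivAt hφc hφpos hint hx).log (II_pos hφpos hint hx).ne'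
  have h2 := h1.neg
  have : -(-((φ x) ^ 2)⁻¹ / II φ x) = lam x := by
    rw [lam_eventually hlam hx, mul_inv]
    field_simp
  rwa [this] at h2

lemma lam_contOn {φ lam : ℝ → ℝ} (hφc : ContinuousOn φ (Icc 0 1))
    (hφpos : ∀ x ∈ Ioo (0:ℝ) 1, 0 < φ x)
    (hint : ∀ x ∈ Ioo (0:ℝ) 1,
      IntervalIntegrable (fun s => ((φ s) ^ 2)⁻¹) volume x 1)
    (hlam : ∀ x ∈ Ioo (0:ℝ) 1, lam x = ((φ x) ^ 2 * ∫ s in x..1, ((φ s) ^ 2)⁻¹)⁻¹) :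
    ContinuousOn lam (Ioo 0 1) := by
  have : ContinuousOn (fun x => ((φ x) ^ 2 * II φ x)⁻¹) (Ioo 0 1) := by
    apply ContinuousOn.inv₀
    · exact ((hφc.mono Ioo_subset_Icc_self).pow 2).mul (II_contOn hφc hφpos hint)
    · intro x hx
      exact mul_ne_zero (pow_ne_zero 2 (hφpos x hx).ne') (II_pos hφpos hint hx).ne'
  exact this.congr fun x hx => lam_eventually hlam hx

lemma ftc_lam {φ lam : ℝ → ℝ} (hφc : ContinuousOn φ (Icc 0 1))
    (hφpos : ∀ x ∈ Ioo (0:ℝ) 1, 0 < φ x)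
    (hint : ∀ x ∈ Ioo (0:ℝ) 1,
      IntervalIntegrable (fun s => ((φ s) ^ 2)⁻¹) volume x 1)
    (hlam : ∀ x ∈ Ioo (0:ℝ) 1, lam x = ((φ x) ^ 2 * ∫ s in x..1, ((φ s) ^ 2)⁻¹)⁻¹)
    {t a : ℝ} (ht : t ∈ Ioo (0:ℝ) 1) (ha : a ∈ Ioo (0:ℝ) 1) :
    ∫ s in t..a, lam s = Real.log (II φ t) - Real.log (II φ a) := by
  have hsub : uIcc t a ⊆ Ioo (0:ℝ) 1 := Set.ordConnected_Ioo.uIcc_subset ht ha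
  have hInt : IntervalIntegrable lam volume t a :=
    ((lam_contOn hφc hφpos hint hlam).mono hsub).intervalIntegrable
  have := intervalIntegral.integral_eq_sub_of_hasDerivAt
    (fun x hx => negLogII_hasDerivAt hφc hφpos hint hlam (hsub hx)) hInt
  rw [this]; ring

lemma slope_tendsto {φ : ℝ → ℝ} (hφ0 : φ 0 = 0)
    (hφ'0 : HasDerivWithinAt φ 1 (Ici 0) 0) :
    Tendsto (fun s => φ s / s) (𝓝[>](0:ℝ)) (𝓝 1) := by
  have h := hasDerivWithinAt_iff_tendsto_slope.mp hφ'0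
  have hset : (Ici (0:ℝ)) \ {0} = Ioi 0 := by
    ext x; simp [mem_diff, lt_iff_le_and_ne, eq_comm, and_comm]
  rw [hset] at h
  refine h.congr' ?_
  filter_upwards [self_mem_nhdsWithin] with s _
  simp [slope_def_field, hφ0, div_eq_mul_inv]

lemma integral_inv_sq {t d : ℝ} (ht : 0 < t) (hd : t ≤ d) :
    ∫ s in t..d, ((s:ℝ) ^ 2)⁻¹ = t⁻¹ - d⁻¹ := by
  have h : ∀ x ∈ uIcc t d, HasDerivAt (fun y : ℝ => -y⁻¹) ((x ^ 2)⁻¹) x := by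
    intro x hx
    rw [uIcc_of_le hd] at hx
    have hx0 : x ≠ 0 := (lt_of_lt_of_le ht hx.1).ne'
    have h' := (hasDerivAt_inv hx0).neg
    rw [neg_neg] at h'
    exact h'
  have hi : IntervalIntegrable (fun s : ℝ => ((s:ℝ) ^ 2)⁻¹) volume t d := by
    apply ContinuousOn.intervalIntegrable
    apply ContinuousOn.inv₀ (continuousOn_id.pow 2)
    intro x hx
    rw [uIcc_of_le hd] at hx
    exact pow_ne_zero 2 (lt_of_lt_of_le ht hx.1).ne'
  rw [intervalIntegral.integral_eq_sub_of_hasDerivAt h hi]; ring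

set_option maxHeartbeats 1000000 in
lemma phiII_tendsto {φ : ℝ → ℝ} (hφc : ContinuousOn φ (Icc 0 1))
    (hφpos : ∀ x ∈ Ioo (0:ℝ) 1, 0 < φ x)
    (hφ0 : φ 0 = 0) (hφ'0 : HasDerivWithinAt φ 1 (Ici 0) 0)
    (hint : ∀ x ∈ Ioo (0:ℝ) 1,
      IntervalIntegrable (fun s => ((φ s) ^ 2)⁻¹) volume x 1) :
    Tendsto (fun t => φ t * II φ t) (𝓝[>](0:ℝ)) (𝓝 1) := by
  rw [Metric.tendsto_nhdsWithin_nhds]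
  intro ε hε
  set ε₁ : ℝ := min (ε/20) (1/2) with hε₁def
  have hε₁pos : 0 < ε₁ := lt_min (by linarith) one_half_pos
  have hε₁le : ε₁ ≤ 1/2 := min_le_right _ _
  have hε₁ε : ε₁ ≤ ε/20 := min_le_left _ _
  obtain ⟨δ₀, hδ₀pos, hδ₀⟩ :=
    Metric.tendsto_nhdsWithin_nhds.mp (slope_tendsto hφ0 hφ'0) ε₁ hε₁pos
  set d : ℝ := min (δ₀/2) (1/2) with hddef
  have hd0 : 0 < d := lt_min (by linarith) one_half_pos
  have hd1 : d < 1 := lt_of_le_of_lt (min_le_right _ _) (by norm_num)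
  have hdδ : d < δ₀ := lt_of_le_of_lt (min_le_left _ _) (by linarith)
  have hdIoo : d ∈ Ioo (0:ℝ) 1 := ⟨hd0, hd1⟩
  have hφbound : ∀ s, 0 < s → s ≤ d → (1-ε₁)*s ≤ φ s ∧ φ s ≤ (1+ε₁)*s := by
    intro s hs hsd
    have hdist : dist s (0:ℝ) < δ₀ := by
      rw [Real.dist_eq, sub_zero, abs_of_pos hs]; linarith
    have h := hδ₀ (mem_Ioi.mpr hs) hdist
    rw [Real.dist_eq] at h
    have h2 := abs_lt.mp h
    have h3 : φ s / s * s = φ s := div_mul_cancel₀ _ hs.ne'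
    constructor <;> nlinarith [h2.1, h2.2]
  set K : ℝ := II φ d with hKdef
  have hK : 0 < K := II_pos hφpos hint hdIoo
  refine ⟨min (ε₁ * d) (ε₁ / K), lt_min (by positivity) (by positivity), ?_⟩
  intro t htI hdist
  have ht0 : 0 < t := htI
  rw [Real.dist_eq, sub_zero, abs_of_pos ht0] at hdist
  have htd : t < d := by
    have h1 : t < ε₁ * d := lt_of_lt_of_le hdist (min_le_left _ _)
    nlinarith
  have htK : t * K < ε₁ := by
    have h1 : t < ε₁ / K := lt_of_lt_of_le hdist (min_le_right _ _)
    exact (lt_div_iff₀ hK).mp h1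
  have htdd : t * d⁻¹ < ε₁ := by
    have h1 : t < ε₁ * d := lt_of_lt_of_le hdist (min_le_left _ _)
    rw [← div_eq_mul_inv]
    exact (div_lt_iff₀ hd0).mpr (by linarith)
  have htIoo : t ∈ Ioo (0:ℝ) 1 := ⟨ht0, htd.trans hd1⟩
  -- split the integral
  set g : ℝ → ℝ := fun s => ((φ s) ^ 2)⁻¹ with hg
  have h1 : IntervalIntegrable g volume t d := by
    refine (hint t htIoo).mono_set ?_
    rw [uIcc_of_le htd.le, uIcc_of_le htIoo.2.le]
    exact Icc_subset_Icc le_rfl hd1.le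
  have hsplit : II φ t = (∫ s in t..d, g s) + K := by
    have := intervalIntegral.integral_add_adjacent_intervals h1 (hint d hdIoo)
    simp only [II, hKdef]
    linarith [this]
  have hIinv := integral_inv_sq ht0 htd.le
  have hinvtd : 0 ≤ t⁻¹ - d⁻¹ := sub_nonneg.mpr (inv_anti₀ ht0 htd.le)
  -- pointwise bounds integrated
  have hisq : IntervalIntegrable (fun s : ℝ => ((s:ℝ)^2)⁻¹) volume t d := by
    apply ContinuousOn.intervalIntegrable
    apply ContinuousOn.inv₀ (continuousOn_id.pow 2)
    intro x hx; rw [uIcc_of_le htd.le] at hx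
    exact pow_ne_zero 2 (lt_of_lt_of_le ht0 hx.1).ne'
  have hlow : ((1+ε₁)^2)⁻¹ * (t⁻¹ - d⁻¹) ≤ ∫ s in t..d, g s := by
    have heq : ∫ s in t..d, ((1+ε₁)^2)⁻¹ * ((s:ℝ)^2)⁻¹
        = ((1+ε₁)^2)⁻¹ * (t⁻¹ - d⁻¹) := by
      rw [intervalIntegral.integral_const_mul, hIinv]
    rw [← heq]
    refine intervalIntegral.integral_mono_on htd.le (hisq.const_mul _) h1 ?_
    intro s hs
    have hs0 : 0 < s := lt_of_lt_of_le ht0 hs.1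
    have hb := hφbound s hs0 hs.2
    have hφs : 0 < φ s := hφpos s ⟨hs0, lt_of_le_of_lt hs.2 hd1⟩
    have key : (φ s)^2 ≤ (1+ε₁)^2 * s^2 := by
      have := pow_le_pow_left₀ hφs.le hb.2 2
      rwa [mul_pow] at this
    calc ((1+ε₁)^2)⁻¹ * (s^2)⁻¹ = ((1+ε₁)^2 * s^2)⁻¹ := by rw [mul_inv]
    _ ≤ ((φ s)^2)⁻¹ := inv_anti₀ (pow_pos hφs 2) key
  have hupp : (∫ s in t..d, g s) ≤ ((1-ε₁)^2)⁻¹ * (t⁻¹ - d⁻¹) := by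
    have heq : ∫ s in t..d, ((1-ε₁)^2)⁻¹ * ((s:ℝ)^2)⁻¹
        = ((1-ε₁)^2)⁻¹ * (t⁻¹ - d⁻¹) := by
      rw [intervalIntegral.integral_const_mul, hIinv]
    rw [← heq]
    refine intervalIntegral.integral_mono_on htd.le h1 (hisq.const_mul _) ?_
    intro s hs
    have hs0 : 0 < s := lt_of_lt_of_le ht0 hs.1
    have hb := hφbound s hs0 hs.2
    have hφs : 0 < φ s := hφpos s ⟨hs0, lt_of_le_of_lt hs.2 hd1⟩
    have h1e : (0:ℝ) < 1 - ε₁ := by linarith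
    have hpos : (0:ℝ) < (1-ε₁)^2 * s^2 := mul_pos (pow_pos h1e 2) (pow_pos hs0 2)
    have key : (1-ε₁)^2 * s^2 ≤ (φ s)^2 := by
      have := pow_le_pow_left₀ (by positivity : (0:ℝ) ≤ (1-ε₁)*s) hb.1 2
      rwa [mul_pow] at this
    calc ((φ s)^2)⁻¹ ≤ ((1-ε₁)^2 * s^2)⁻¹ := inv_anti₀ hpos key
    _ = ((1-ε₁)^2)⁻¹ * (s^2)⁻¹ := by rw [mul_inv]
  -- bounds on φ t
  have hφtb := hφbound t ht0 htd.le
  have hφt : 0 < φ t := hφpos t htIoo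
  have hIIt : 0 < II φ t := II_pos hφpos hint htIoo
  have hcmpos : (0:ℝ) < (1+ε₁)^2 := by positivity
  have hcppos : (0:ℝ) < (1-ε₁)^2 := by nlinarith
  -- lower bound
  have hlow2 : ((1-ε₁)*t) * (((1+ε₁)^2)⁻¹ * (t⁻¹ - d⁻¹)) ≤ φ t * II φ t := by
    refine mul_le_mul hφtb.1 ?_ (by positivity) hφt.le
    rw [hsplit]; linarith
  have hlowid : ((1-ε₁)*t) * (((1+ε₁)^2)⁻¹ * (t⁻¹ - d⁻¹))
      = (1-ε₁) * ((1+ε₁)^2)⁻¹ * (1 - t * d⁻¹) := by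
    field_simp
  have hcm : (1 - 4*ε₁) ≤ (1-ε₁) * ((1+ε₁)^2)⁻¹ * (1-ε₁) := by
    rw [mul_comm ((1:ℝ)-ε₁) (((1+ε₁)^2)⁻¹), mul_assoc, ← div_eq_inv_mul,
      le_div_iff₀ hcmpos]
    nlinarith [mul_nonneg (sq_nonneg ε₁) hε₁pos.le, sq_nonneg ε₁]
  have hfinlow : 1 - ε < φ t * II φ t := by
    have h5 : (1-ε₁) * ((1+ε₁)^2)⁻¹ * (1 - t*d⁻¹)
        ≥ (1-ε₁) * ((1+ε₁)^2)⁻¹ * (1 - ε₁) := by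
      have hb : 0 ≤ (1-ε₁) * ((1+ε₁)^2)⁻¹ :=
        mul_nonneg (by linarith) (by positivity)
      nlinarith [htdd]
    rw [hlowid] at hlow2
    nlinarith
  -- upper bound
  have hupp2 : φ t * II φ t ≤ ((1+ε₁)*t) * (((1-ε₁)^2)⁻¹ * (t⁻¹ - d⁻¹) + K) := by
    refine mul_le_mul hφtb.2 ?_ hIIt.le (by positivity)
    rw [hsplit]; linarith
  have huppid : ((1+ε₁)*t) * (((1-ε₁)^2)⁻¹ * (t⁻¹ - d⁻¹) + K)
      = (1+ε₁) * (((1-ε₁)^2)⁻¹ * (1 - t*d⁻¹) + t*K) := by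
    field_simp
  have hcp : ((1-ε₁)^2)⁻¹ ≤ 1 + 8*ε₁ := by
    rw [← one_div, div_le_iff₀ hcppos]
    nlinarith [sq_nonneg (ε₁ - 1/2)]
  have hfinupp : φ t * II φ t < 1 + ε := by
    rw [huppid] at hupp2
    have hcpn : (0:ℝ) ≤ ((1-ε₁)^2)⁻¹ := by positivity
    have htd0 : 0 < t * d⁻¹ := by positivity
    have h6 : ((1-ε₁)^2)⁻¹ * (1 - t*d⁻¹) ≤ ((1-ε₁)^2)⁻¹ := by nlinarith
    have h7 : (1+ε₁) * (((1-ε₁)^2)⁻¹ * (1 - t*d⁻¹) + t*K)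
        ≤ (1+ε₁) * ((1 + 8*ε₁) + ε₁) := by
      have : ((1-ε₁)^2)⁻¹ * (1 - t*d⁻¹) + t*K ≤ (1 + 8*ε₁) + ε₁ := by linarith
      nlinarith [this]
    nlinarith
  rw [Real.dist_eq]
  exact abs_lt.mpr ⟨by linarith, by linarith⟩

lemma II_tendsto_zero {φ : ℝ → ℝ} (hφc : ContinuousOn φ (Icc 0 1))
    (hφpos : ∀ x ∈ Ioo (0:ℝ) 1, 0 < φ x) (hφ1 : 0 < φ 1) :
    Tendsto (II φ) (𝓝[<](1:ℝ)) (𝓝 0) := by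
  set g : ℝ → ℝ := fun s => ((φ s) ^ 2)⁻¹ with hg
  have hgc2 : ContinuousOn g (Icc (1/2) 1) := by
    apply ContinuousOn.inv₀ ((hφc.mono (Icc_subset_Icc (by norm_num) le_rfl)).pow 2)
    intro x hx
    rcases eq_or_lt_of_le hx.2 with h | h
    · rw [h]; exact pow_ne_zero 2 hφ1.ne'
    · exact pow_ne_zero 2 (hφpos x ⟨lt_of_lt_of_le one_half_pos hx.1, h⟩).ne'
  obtain ⟨C, hC⟩ := isCompact_Icc.exists_bound_of_continuousOn hgc2
  refine squeeze_zero_norm' (a := fun t => C * |1 - t|) ?_ ?_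
  · filter_upwards [Ioo_mem_nhdsLT_of_mem (⟨one_half_lt_one, le_rfl⟩ :
      (1:ℝ) ∈ Ioc (1/2) 1)] with t ht
    have : ∀ x ∈ Set.uIoc t 1, ‖g x‖ ≤ C := by
      intro x hx
      rw [uIoc_of_le ht.2.le] at hx
      exact hC x ⟨le_trans ht.1.le hx.1.le, hx.2⟩
    exact intervalIntegral.norm_integral_le_of_norm_le_const this
  · have h1 : Tendsto (fun t : ℝ => |1 - t|) (𝓝[<](1:ℝ)) (𝓝 0) := by
      have : Tendsto (fun t : ℝ => |1 - t|) (𝓝 (1:ℝ)) (𝓝 |1 - 1|) := by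
        exact (continuous_const.sub continuous_id).abs.tendsto 1
      simpa using this.mono_left nhdsWithin_le_nhds
    simpa using h1.const_mul C

lemma II_tendsto_atTop {φ : ℝ → ℝ} (hφc : ContinuousOn φ (Icc 0 1))
    (hφpos : ∀ x ∈ Ioo (0:ℝ) 1, 0 < φ x)
    (hφ0 : φ 0 = 0) (hφ'0 : HasDerivWithinAt φ 1 (Ici 0) 0)
    (hint : ∀ x ∈ Ioo (0:ℝ) 1,
      IntervalIntegrable (fun s => ((φ s) ^ 2)⁻¹) volume x 1) :
    Tendsto (II φ) (𝓝[>](0:ℝ)) atTop := by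
  have hmemIoo : Ioo (0:ℝ) 1 ∈ 𝓝[>](0:ℝ) :=
    Ioo_mem_nhdsGT_of_mem ⟨le_rfl, zero_lt_one⟩
  have hphi0 : Tendsto φ (𝓝[>](0:ℝ)) (𝓝[>] 0) := by
    rw [tendsto_nhdsWithin_iff]
    constructor
    · have h := hφ'0.continuousWithinAt
      rw [ContinuousWithinAt, hφ0] at h
      exact h.mono_left (nhdsWithin_mono _ Ioi_subset_Ici_self)
    · filter_upwards [hmemIoo] with t ht
      exact hφpos t ht
  have hinv : Tendsto (fun t => (φ t)⁻¹) (𝓝[>](0:ℝ)) atTop :=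
    hphi0.inv_tendsto_nhdsGT_zero
  have hmul : Tendsto (fun t => (φ t * II φ t) * (φ t)⁻¹) (𝓝[>](0:ℝ)) atTop :=
    (phiII_tendsto hφc hφpos hφ0 hφ'0 hint).pos_mul_atTop one_pos hinv
  refine hmul.congr' ?_
  filter_upwards [hmemIoo] with t ht
  rw [mul_comm (φ t) (II φ t), mul_assoc, mul_inv_cancel₀ (hφpos t ht).ne', mul_one]

lemma lintegral_top_aux {lam : ℝ → ℝ} {S : Set ℝ} {l : Filter ℝ} [l.NeBot]
    {F : ℝ → ℝ} (hF : Tendsto F l atTop)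
    (hle : ∀ᶠ t in l, ENNReal.ofReal (F t) ≤ ∫⁻ s in S, ENNReal.ofReal (lam s)) :
    ∫⁻ s in S, ENNReal.ofReal (lam s) = ⊤ := by
  by_contra h
  have hev : ∀ᶠ t in l, (∫⁻ s in S, ENNReal.ofReal (lam s)).toReal < F t :=
    hF.eventually_gt_atTop _
  obtain ⟨t, h1, h2⟩ := (hle.and hev).exists
  have := (ENNReal.ofReal_le_iff_le_toReal h).mp h1
  linarith

lemma key_le {lam : ℝ → ℝ} {t a c d : ℝ} (hta : t ≤ a)
    (hInt : IntegrableOn lam (Ioc t a) volume)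
    (hnn : ∀ x ∈ Ioc t a, 0 ≤ lam x)
    (hsub : Ioo t a ⊆ Ioo c d) :
    ENNReal.ofReal (∫ s in t..a, lam s)
      ≤ ∫⁻ s in Ioo c d, ENNReal.ofReal (lam s) := by
  rw [intervalIntegral.integral_of_le hta,
    MeasureTheory.ofReal_integral_eq_lintegral_ofReal hInt
      ((ae_restrict_iff' measurableSet_Ioc).mpr (ae_of_all _ hnn)),
    setLIntegral_congr (Ioo_ae_eq_Ioc (μ := volume) (a := t) (b := a)).symm]
  exact lintegral_mono_set hsub

/-- For the eigenvalue function `λ(x) = 1/(φ(x)²·∫ₓ¹ φ(s)⁻² ds)`, with `φ` a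
positive `C¹` function on `(0,1)` extending continuously to `[0,1]` with
`φ(0) = 0`, `φ'(0) = 1` (right derivative) and `φ(1) > 0`: for any `a ∈ (0,1)`
the limits `lim_{t→0⁺} λ(t)·exp(-∫ₜᵃ λ)` and `lim_{t→1⁻} λ(t)·exp(-∫ₐᵗ λ)`
exist, are finite and strictly positive; consequently
`∫₀ᵃ λ = +∞` and `∫ₐ¹ λ = +∞`. -/
theorem stmt_14 (φ φ' lam : ℝ → ℝ)
    (hφc : ContinuousOn φ (Set.Icc 0 1))
    (hφpos : ∀ x ∈ Set.Ioo (0:ℝ) 1, 0 < φ x)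
    (hφ' : ∀ x ∈ Set.Ioo (0:ℝ) 1, HasDerivAt φ (φ' x) x)
    (hφ'c : ContinuousOn φ' (Set.Ioo 0 1))
    (hφ0 : φ 0 = 0)
    (hφ'0 : HasDerivWithinAt φ 1 (Set.Ici 0) 0)
    (hφ1 : 0 < φ 1)
    (hint : ∀ x ∈ Set.Ioo (0:ℝ) 1,
      IntervalIntegrable (fun s => ((φ s) ^ 2)⁻¹) MeasureTheory.volume x 1)
    (hlam : ∀ x ∈ Set.Ioo (0:ℝ) 1,
      lam x = ((φ x) ^ 2 * ∫ s in x..1, ((φ s) ^ 2)⁻¹)⁻¹)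
    (hlampos : ∀ x ∈ Set.Ioo (0:ℝ) 1, 0 < lam x) :
    ∀ a ∈ Set.Ioo (0:ℝ) 1,
      (∃ L > (0:ℝ), Filter.Tendsto (fun t => lam t * Real.exp (-∫ s in t..a, lam s))
        (nhdsWithin 0 (Set.Ioi 0)) (nhds L)) ∧
      (∃ L > (0:ℝ), Filter.Tendsto (fun t => lam t * Real.exp (-∫ s in a..t, lam s))
        (nhdsWithin 1 (Set.Iio 1)) (nhds L)) ∧
      (∫⁻ s in Set.Ioo (0:ℝ) a, ENNReal.ofReal (lam s) = ⊤) ∧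
      (∫⁻ s in Set.Ioo a 1, ENNReal.ofReal (lam s) = ⊤) := by
  intro a ha
  have hIIa : 0 < II φ a := II_pos hφpos hint ha
  have hmem0 : Ioo (0:ℝ) a ∈ 𝓝[>](0:ℝ) := Ioo_mem_nhdsGT_of_mem ⟨le_rfl, ha.1⟩
  have hmem0' : Ioo (0:ℝ) 1 ∈ 𝓝[>](0:ℝ) := Ioo_mem_nhdsGT_of_mem ⟨le_rfl, zero_lt_one⟩
  have hmem1 : Ioo a 1 ∈ 𝓝[<](1:ℝ) := Ioo_mem_nhdsLT_of_mem ⟨ha.2, le_rfl⟩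
  have hmem1' : Ioo (0:ℝ) 1 ∈ 𝓝[<](1:ℝ) := Ioo_mem_nhdsLT_of_mem ⟨zero_lt_one, le_rfl⟩
  -- the pointwise identity at 0
  have hid0 : ∀ t ∈ Ioo (0:ℝ) 1,
      lam t * Real.exp (-∫ s in t..a, lam s)
        = II φ a * ((φ t * II φ t) ^ 2)⁻¹ := by
    intro t ht
    have hIIt : 0 < II φ t := II_pos hφpos hint ht
    have hφt : 0 < φ t := hφpos t ht
    rw [ftc_lam hφc hφpos hint hlam ht ha, lam_eventually hlam ht,
      neg_sub, Real.exp_sub, Real.exp_log hIIa, Real.exp_log hIIt]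
    rw [mul_pow, mul_inv, mul_inv, div_eq_mul_inv, ← inv_pow, ← inv_pow]
    ring
  -- the pointwise identity at 1
  have hid1 : ∀ t ∈ Ioo (0:ℝ) 1,
      lam t * Real.exp (-∫ s in a..t, lam s) = ((φ t) ^ 2 * II φ a)⁻¹ := by
    intro t ht
    have hIIt : 0 < II φ t := II_pos hφpos hint ht
    have hφt : 0 < φ t := hφpos t ht
    rw [ftc_lam hφc hφpos hint hlam ha ht, lam_eventually hlam ht,
      neg_sub, Real.exp_sub, Real.exp_log hIIa, Real.exp_log hIIt]
    have h1 : φ t ≠ 0 := hφt.ne'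
    have h2 : II φ t ≠ 0 := hIIt.ne'
    have h3 : II φ a ≠ 0 := hIIa.ne'
    field_simp
  refine ⟨⟨II φ a, hIIa, ?_⟩, ⟨((φ 1) ^ 2 * II φ a)⁻¹, by positivity, ?_⟩, ?_, ?_⟩
  · -- limit at 0
    have h2 := ((phiII_tendsto hφc hφpos hφ0 hφ'0 hint).pow 2).inv₀ (by norm_num)
    have h3 := h2.const_mul (II φ a)
    have h4 : Tendsto (fun t => II φ a * ((φ t * II φ t) ^ 2)⁻¹)
        (𝓝[>](0:ℝ)) (𝓝 (II φ a)) := by simpa using h3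
    refine h4.congr' ?_
    filter_upwards [hmem0'] with t ht
    exact (hid0 t ht).symm
  · -- limit at 1
    have hφtend : Tendsto φ (𝓝[<](1:ℝ)) (𝓝 (φ 1)) := by
      have h : Tendsto φ (𝓝[Ioo (0:ℝ) 1] 1) (𝓝 (φ 1)) :=
        (hφc 1 ⟨by norm_num, le_rfl⟩).mono Ioo_subset_Icc_self
      rwa [nhdsWithin_Ioo_eq_nhdsLT zero_lt_one] at h
    have h5 := ((hφtend.pow 2).mul_const (II φ a)).inv₀
      (mul_ne_zero (pow_ne_zero 2 hφ1.ne') hIIa.ne')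
    refine h5.congr' ?_
    filter_upwards [hmem1'] with t ht
    exact (hid1 t ht).symm
  · -- divergence at 0
    refine lintegral_top_aux (l := 𝓝[>](0:ℝ)) (F := fun t => ∫ s in t..a, lam s) ?_ ?_
    · have hlog : Tendsto (fun t => Real.log (II φ t)) (𝓝[>](0:ℝ)) atTop :=
        Real.tendsto_log_atTop.comp (II_tendsto_atTop hφc hφpos hφ0 hφ'0 hint)
      have h6 : Tendsto (fun t => Real.log (II φ t) - Real.log (II φ a))
          (𝓝[>](0:ℝ)) atTop := by
        simpa [sub_eq_add_neg] using
          tendsto_atTop_add_const_right _ (-Real.log (II φ a)) hlog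
      refine h6.congr' ?_
      filter_upwards [hmem0'] with t ht
      exact (ftc_lam hφc hφpos hint hlam ht ha).symm
    · filter_upwards [hmem0] with t ht
      have htIoo : t ∈ Ioo (0:ℝ) 1 := ⟨ht.1, ht.2.trans ha.2⟩
      have hsub : uIcc t a ⊆ Ioo (0:ℝ) 1 := Set.ordConnected_Ioo.uIcc_subset htIoo ha
      have hInt : IntervalIntegrable lam volume t a :=
        ((lam_contOn hφc hφpos hint hlam).mono hsub).intervalIntegrable
      refine key_le ht.2.le
        ((intervalIntegrable_iff_integrableOn_Ioc_of_le ht.2.le).mp hInt)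
        (fun x hx => (hlampos x ⟨ht.1.trans hx.1, lt_of_le_of_lt hx.2 ha.2⟩).le)
        (fun x hx => ⟨ht.1.trans hx.1, hx.2⟩)
  · -- divergence at 1
    refine lintegral_top_aux (l := 𝓝[<](1:ℝ)) (F := fun t => ∫ s in a..t, lam s) ?_ ?_
    · have hII0 : Tendsto (II φ) (𝓝[<](1:ℝ)) (𝓝[>] 0) := by
        rw [tendsto_nhdsWithin_iff]
        refine ⟨II_tendsto_zero hφc hφpos hφ1, ?_⟩
        filter_upwards [hmem1'] with t ht
        exact II_pos hφpos hint ht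
      have hlog : Tendsto (fun t => Real.log (II φ t)) (𝓝[<](1:ℝ)) atBot :=
        Real.tendsto_log_nhdsGT_zero.comp hII0
      have h6 : Tendsto (fun t => Real.log (II φ a) - Real.log (II φ t))
          (𝓝[<](1:ℝ)) atTop := by
        have h7 : Tendsto (fun t => -(Real.log (II φ t) - Real.log (II φ a)))
            (𝓝[<](1:ℝ)) atTop := by
          rw [tendsto_neg_atTop_iff]
          simpa [sub_eq_add_neg] using
            tendsto_atBot_add_const_right _ (-Real.log (II φ a)) hlog
        refine h7.congr fun t => by ring
      refine h6.congr' ?_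
      filter_upwards [hmem1'] with t ht
      exact (ftc_lam hφc hφpos hint hlam ha ht).symm
    · filter_upwards [hmem1] with t ht
      have htIoo : t ∈ Ioo (0:ℝ) 1 := ⟨ha.1.trans ht.1, ht.2⟩
      have hsub : uIcc a t ⊆ Ioo (0:ℝ) 1 := Set.ordConnected_Ioo.uIcc_subset ha htIoo
      have hInt : IntervalIntegrable lam volume a t :=
        ((lam_contOn hφc hφpos hint hlam).mono hsub).intervalIntegrable
      refine key_le ht.1.le
        ((intervalIntegrable_iff_integrableOn_Ioc_of_le ht.1.le).mp hInt)
        (fun x hx => (hlampos x ⟨lt_trans ha.1 hx.1, lt_of_le_of_lt hx.2 ht.2⟩).le)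
        (fun x hx => ⟨hx.1, hx.2.trans ht.2⟩)
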